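/- An abelian group G is isomorphic (as an abelian group) to the second derived Alexander module A₂(M) = M/(t² − 1)M of some Noetherian (t−1)-invertible Λ-module M if and only if G is a finite group of odd order. -/

import Mathlib

open Polynomial

/-- `Λ` is the ring `ℤ[t,t⁻¹]` of Laurent polynomials with integer coefficients. -/
abbrev Λ : Type := LaurentPolynomial ℤ

/-- `tL` is the element `t` of `Λ = ℤ[t,t⁻¹]`. -/
noncomputable def tL : Λ := LaurentPolynomial.T 1

/-- The submodule `(t^n − 1)M` of a `Λ`-module `M`. -/
noncomputable def derivedSub (M : Type) [AddCommGroup M] [Module Λ M] (n : ℕ) :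
    Submodule Λ M :=
  LinearMap.range ((tL ^ n - 1) • (LinearMap.id : M →ₗ[Λ] M))

/-- A bundled Noetherian `(t−1)`-invertible `Λ`-module. -/
structure NoethInvModule where
  carrier : Type
  [acg : AddCommGroup carrier]
  [mod : Module Λ carrier]
  noeth : IsNoetherian Λ carrier
  inv : Function.Bijective (fun v : carrier => (tL - 1) • v)

attribute [instance] NoethInvModule.acg NoethInvModule.mod

noncomputable def ev : Λ →+* ℤ :=
  ((AddMonoidAlgebra.lift ℤ ℤ ℤ)
    ((Units.coeHom ℤ).comp (zpowersHom ℤˣ (-1 : ℤˣ)))).toRingHom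

lemma ev_T (n : ℤ) : ev (LaurentPolynomial.T n) = ((-1 : ℤˣ) ^ n : ℤˣ) := by
  show (AddMonoidAlgebra.lift ℤ ℤ ℤ) _ (AddMonoidAlgebra.single n (1:ℤ)) = _
  rw [AddMonoidAlgebra.lift_single]
  simp

lemma ev_tL : ev tL = -1 := by rw [tL, ev_T]; simp

lemma ev_Tneg : ev (LaurentPolynomial.T (-1)) = -1 := by rw [ev_T]; simp

lemma ev_sq : ev (tL ^ 2 - 1) = 0 := by
  rw [map_sub, map_pow, map_one, ev_tL]; norm_num

lemma ev_sub_one : ev (tL - 1) = -2 := by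
  rw [map_sub, map_one, ev_tL]; norm_num

open LaurentPolynomial in
lemma smul_eq_ev_smul {Q : Type*} [AddCommGroup Q] [Module Λ Q]
    (h : ∀ q : Q, tL • q = -q) (c : Λ) (q : Q) : c • q = ev c • q := by
  have hT1 : ∀ q : Q, (T 1 : Λ) • q = -q := h
  have hTm : ∀ q : Q, (T (-1) : Λ) • q = -q := by
    intro q
    have h2 : (T 1 : Λ) • ((T (-1) : Λ) • q) = q := by
      rw [← mul_smul, ← T_add]
      norm_num [T_zero, one_smul]
    rw [hT1] at h2
    rw [neg_eq_iff_eq_neg] at h2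
    rw [h2]
  have hTn : ∀ (n : ℤ) (q : Q), (T n : Λ) • q = ev (T n) • q := by
    intro n
    induction n using Int.induction_on with
    | zero => intro q; simp [T_zero, one_smul]
    | succ k ih =>
      intro q
      rw [show ((k : ℤ) + 1) = (k : ℤ) + 1 from rfl, T_add, mul_smul, hT1, ih, map_mul,
        ev_T 1]
      simp [mul_smul]
    | pred k ih =>
      intro q
      rw [show (-(k : ℤ) - 1) = -(k : ℤ) + (-1) from by ring, T_add, mul_smul, hTm, ih,
        map_mul, ev_Tneg]
      simp [mul_smul]
  induction c using LaurentPolynomial.induction_on' with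
  | add p r hp hr => rw [add_smul, hp, hr, map_add, add_smul]
  | C_mul_T n a =>
    have hC : (LaurentPolynomial.C (a : ℤ) : Λ) = ((a : ℤ) : Λ) :=
      eq_intCast (LaurentPolynomial.C : ℤ →+* Λ) a
    rw [mul_smul, hTn n, hC, Int.cast_smul_eq_zsmul, map_mul, map_intCast, mul_smul]
    simp

/-- An abelian group `G` is isomorphic to the second derived Alexander module
`A₂(M) = M/(t² − 1)M` of some Noetherian (t−1)-invertible Λ-module `M` iff `G` is a finite
group of odd order. -/
theorem second_derived_alexander_realization (G : Type) [AddCommGroup G] :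
    (∃ M : NoethInvModule, Nonempty (G ≃+ (M.carrier ⧸ derivedSub M.carrier 2))) ↔
      (Finite G ∧ Odd (Nat.card G)) := by
  constructor
  · rintro ⟨M, ⟨e⟩⟩
    haveI := M.noeth
    set Q := M.carrier ⧸ derivedSub M.carrier 2 with hQdef
    have hzero : ∀ q : Q, (tL ^ 2 - 1) • q = 0 := by
      intro q
      obtain ⟨m, rfl⟩ := Submodule.Quotient.mk_surjective _ q
      rw [← Submodule.Quotient.mk_smul, Submodule.Quotient.mk_eq_zero]
      exact ⟨m, by simp⟩
    have hsurj : ∀ q : Q, ∃ p : Q, (tL - 1) • p = q := by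
      intro q
      obtain ⟨m, rfl⟩ := Submodule.Quotient.mk_surjective _ q
      obtain ⟨m', hm'⟩ := M.inv.2 m
      exact ⟨Submodule.Quotient.mk m', by
        rw [← Submodule.Quotient.mk_smul]
        exact congrArg _ hm'⟩
    have hneg : ∀ q : Q, tL • q = -q := by
      intro q
      obtain ⟨p, rfl⟩ := hsurj q
      have h0 : (tL + 1) • ((tL - 1) • p) = 0 := by
        rw [← mul_smul, show (tL + 1) * (tL - 1) = tL ^ 2 - 1 from by ring]
        exact hzero p
      rw [add_smul, one_smul] at h0
      exact eq_neg_of_add_eq_zero_left h0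
    have key : ∀ (c : Λ) (q : Q), c • q = ev c • q := fun c q => smul_eq_ev_smul hneg c q
    obtain ⟨s, hs⟩ := Module.finite_def.mp (inferInstance : Module.Finite Λ Q)
    have hNle : Submodule.span Λ (↑s : Set Q) ≤
        { carrier := ↑(Submodule.span ℤ (↑s : Set Q)),
          add_mem' := fun h1 h2 => add_mem h1 h2,
          zero_mem' := zero_mem _,
          smul_mem' := fun c x hx => by
            rw [key]
            exact Submodule.smul_mem _ _ hx } :=
      Submodule.span_le.mpr (fun y hy => Submodule.subset_span hy)
    have htop : Submodule.span ℤ (↑s : Set Q) = ⊤ := by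
      rw [eq_top_iff]
      intro x _
      have hx : x ∈ Submodule.span Λ (↑s : Set Q) := by rw [hs]; trivial
      exact hNle hx
    haveI hfinZ : Module.Finite ℤ Q := Module.finite_def.mpr ⟨s, htop⟩
    have hsurj2 : ∀ q : Q, ∃ p : Q, (-2 : ℤ) • p = q := by
      intro q
      obtain ⟨p, hp⟩ := hsurj q
      refine ⟨p, ?_⟩
      rw [← hp, key (tL - 1) p, ev_sub_one]
    have hle : (⊤ : Submodule ℤ Q) ≤ (Ideal.span {(2 : ℤ)}) • ⊤ := by
      intro x _
      obtain ⟨p, hp⟩ := hsurj2 x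
      rw [← hp]
      exact Submodule.smul_mem_smul
        (Ideal.mem_span_singleton.mpr ⟨-1, by ring⟩) trivial
    obtain ⟨r, hr1, hr0⟩ :=
      Submodule.exists_sub_one_mem_and_smul_eq_zero_of_fg_of_le_smul
        (Ideal.span {(2 : ℤ)}) ⊤ (Module.finite_def.mp hfinZ) hle
    have hrodd : Odd r := by
      obtain ⟨k, hk⟩ := Ideal.mem_span_singleton.mp hr1
      exact ⟨k, by linarith⟩
    have hrz : r ≠ 0 := by
      rintro rfl
      simp at hrodd
    have hnat : ∀ x : Q, r.natAbs • x = 0 := by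
      intro x
      have hr : r • x = 0 := hr0 x trivial
      rcases Int.natAbs_eq r with h | h
      · rw [← natCast_zsmul, ← h, hr]
      · rw [← natCast_zsmul, ← neg_neg ((r.natAbs : ℤ)), ← h, neg_smul, hr, neg_zero]
    have htors : AddMonoid.IsTorsion Q := by
      intro x
      rw [isOfFinAddOrder_iff_nsmul_eq_zero]
      exact ⟨r.natAbs, Int.natAbs_pos.mpr hrz, hnat x⟩
    haveI : AddGroup.FG Q := Module.Finite.iff_addGroup_fg.mp hfinZ
    haveI hfinQ : Finite Q := AddCommGroup.finite_of_fg_torsion Q htors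
    haveI hfinG : Finite G := Finite.of_equiv Q e.toEquiv.symm
    refine ⟨hfinG, ?_⟩
    rw [Nat.card_congr e.toEquiv]
    by_contra hodd
    have h2 : 2 ∣ Nat.card Q := by
      rw [Nat.not_odd_iff_even] at hodd
      exact hodd.two_dvd
    haveI : Fintype Q := Fintype.ofFinite Q
    rw [Nat.card_eq_fintype_card] at h2
    haveI : Fact (Nat.Prime 2) := ⟨Nat.prime_two⟩
    obtain ⟨x, hx⟩ := exists_prime_addOrderOf_dvd_card 2 h2
    have hdvd : addOrderOf x ∣ r.natAbs := addOrderOf_dvd_of_nsmul_eq_zero (hnat x)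
    rw [hx] at hdvd
    have : Odd r.natAbs := Int.natAbs_odd.mpr hrodd
    rw [Nat.odd_iff] at this
    omega
  · rintro ⟨hfin, hodd⟩
    letI : Module Λ G := Module.compHom G ev
    have hsmul : ∀ (c : Λ) (g : G), c • g = ev c • g := fun _ _ => rfl
    haveI := hfin
    have hnoeth : IsNoetherian Λ G := isNoetherian_of_finite Λ G
    have hinj : Function.Injective (fun v : G => (tL - 1) • v) := by
      intro v w hvw
      simp only [hsmul, ev_sub_one] at hvw
      have h0 : (-2 : ℤ) • (v - w) = 0 := by rw [smul_sub, hvw, sub_self]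
      have h2 : (2 : ℕ) • (v - w) = 0 := by
        have h2' : (2 : ℤ) • (v - w) = 0 := by
          have := congrArg Neg.neg h0
          rwa [← neg_smul, neg_neg, neg_zero] at this
        rw [two_zsmul] at h2'
        rw [two_nsmul]
        exact h2'
      have hd1 : addOrderOf (v - w) ∣ 2 := addOrderOf_dvd_of_nsmul_eq_zero h2
      have hd2 : addOrderOf (v - w) ∣ Nat.card G := addOrderOf_dvd_natCard _
      have hcop : Nat.Coprime 2 (Nat.card G) := Nat.coprime_two_left.mpr hodd
      have : addOrderOf (v - w) = 1 :=
        Nat.eq_one_of_dvd_coprimes hcop hd1 hd2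
      have := AddMonoid.addOrderOf_eq_one_iff.mp this
      exact sub_eq_zero.mp this
    have hbij : Function.Bijective (fun v : G => (tL - 1) • v) :=
      (Finite.injective_iff_bijective).mp hinj
    have hbot : derivedSub G 2 = ⊥ := by
      rw [derivedSub, LinearMap.range_eq_bot]
      apply LinearMap.ext
      intro v
      simp only [LinearMap.smul_apply, LinearMap.id_coe, id_eq, LinearMap.zero_apply]
      rw [hsmul, ev_sq, zero_smul]
    exact ⟨{ carrier := G, noeth := hnoeth, inv := hbij },
      ⟨(Submodule.quotEquivOfEqBot _ hbot).symm.toAddEquiv⟩⟩
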